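/- Let P be a complex m×m matrix with P² = P, and write P = A + iB where A and B are real m×m matrices. For each λ ∈ (0, 1), multiplication by B defines a linear bijection from ker(A − λI) to ker(A − (1 − λ)I). -/

import Mathlib

open Matrix

private lemma split_parts {m : ℕ} (X Y X' Y' : Matrix (Fin m) (Fin m) ℝ)
    (h : X.map (Complex.ofReal) + Complex.I • Y.map Complex.ofReal =
        X'.map Complex.ofReal + Complex.I • Y'.map Complex.ofReal) :
    X = X' ∧ Y = Y' := by
  constructor <;> ext i j
  · have := congrArg (fun M : Matrix (Fin m) (Fin m) ℂ => (M i j).re) h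
    simpa [Matrix.add_apply, Matrix.smul_apply, Matrix.map_apply] using this
  · have := congrArg (fun M : Matrix (Fin m) (Fin m) ℂ => (M i j).im) h
    simpa [Matrix.add_apply, Matrix.smul_apply, Matrix.map_apply] using this

private lemma mem_ker_iff {m : ℕ} (A : Matrix (Fin m) (Fin m) ℝ) (μ : ℝ) (x : Fin m → ℝ) :
    x ∈ LinearMap.ker (A - μ • (1 : Matrix (Fin m) (Fin m) ℝ)).mulVecLin ↔
      A.mulVec x = μ • x := by
  simp [LinearMap.mem_ker, Matrix.sub_mulVec, Matrix.smul_mulVec, sub_eq_zero]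

theorem ker_bijection {m : ℕ} (P : Matrix (Fin m) (Fin m) ℂ) (hP : P * P = P)
    (A B : Matrix (Fin m) (Fin m) ℝ)
    (hAB : P = A.map (Complex.ofReal) + Complex.I • B.map (Complex.ofReal))
    (lam : ℝ) (hlam0 : 0 < lam) (hlam1 : lam < 1) :
    ∃ e : LinearMap.ker (A - lam • (1 : Matrix (Fin m) (Fin m) ℝ)).mulVecLin ≃ₗ[ℝ]
        LinearMap.ker (A - (1 - lam) • (1 : Matrix (Fin m) (Fin m) ℝ)).mulVecLin,
      ∀ x, (e x : Fin m → ℝ) = B.mulVec (x : Fin m → ℝ) := by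
  -- extract the real identities
  have hexp : (A * A - B * B).map (Complex.ofReal) +
      Complex.I • (A * B + B * A).map Complex.ofReal =
      A.map Complex.ofReal + Complex.I • B.map Complex.ofReal := by
    rw [← hAB, ← hP, hAB]
    have hm : ∀ X Y : Matrix (Fin m) (Fin m) ℝ,
        (X * Y).map (Complex.ofReal) = X.map Complex.ofReal * Y.map Complex.ofReal := by
      intro X Y
      exact Matrix.map_mul (f := Complex.ofRealHom)
    have hs : ∀ X Y : Matrix (Fin m) (Fin m) ℝ,
        (X - Y).map (Complex.ofReal) = X.map Complex.ofReal - Y.map Complex.ofReal := by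
      intro X Y; ext i j; simp [Matrix.map_apply, Matrix.sub_apply]
    have ha : ∀ X Y : Matrix (Fin m) (Fin m) ℝ,
        (X + Y).map (Complex.ofReal) = X.map Complex.ofReal + Y.map Complex.ofReal := by
      intro X Y; ext i j; simp [Matrix.map_apply, Matrix.add_apply]
    rw [hs, ha, hm, hm, hm, hm]
    set a := A.map (Complex.ofReal); set b := B.map (Complex.ofReal)
    rw [add_mul, mul_add, mul_add]
    rw [mul_smul_comm, smul_mul_assoc, smul_mul_assoc, mul_smul_comm, smul_smul,
      Complex.I_mul_I, neg_one_smul, smul_add]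
    abel
  obtain ⟨h1, h2⟩ := split_parts _ _ _ _ hexp
  -- key consequences
  have hAB' : ∀ (μ : ℝ) (x : Fin m → ℝ), A.mulVec x = μ • x →
      A.mulVec (B.mulVec x) = (1 - μ) • B.mulVec x := by
    intro μ x hx
    have : A * B = B - B * A := eq_sub_of_add_eq h2
    rw [Matrix.mulVec_mulVec, this, Matrix.sub_mulVec, ← Matrix.mulVec_mulVec, hx,
      Matrix.mulVec_smul, sub_smul, one_smul]
  have hBB : ∀ (μ : ℝ) (x : Fin m → ℝ), A.mulVec x = μ • x →
      B.mulVec (B.mulVec x) = (μ ^ 2 - μ) • x := by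
    intro μ x hx
    have : B * B = A * A - A := by rw [sub_eq_iff_eq_add.mp h1]; abel
    rw [Matrix.mulVec_mulVec, this, Matrix.sub_mulVec, ← Matrix.mulVec_mulVec, hx,
      Matrix.mulVec_smul, hx, smul_smul, sub_smul, pow_two]
  set c : ℝ := lam ^ 2 - lam with hc
  have hc0 : c ≠ 0 := by nlinarith
  have hc' : (1 - lam) ^ 2 - (1 - lam) = c := by ring
  set K1 := LinearMap.ker (A - lam • (1 : Matrix (Fin m) (Fin m) ℝ)).mulVecLin
  set K2 := LinearMap.ker (A - (1 - lam) • (1 : Matrix (Fin m) (Fin m) ℝ)).mulVecLin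
  have hf : ∀ x : K1, B.mulVec (x : Fin m → ℝ) ∈ K2 := by
    intro x
    rw [mem_ker_iff]
    exact hAB' lam _ ((mem_ker_iff A lam _).1 x.2)
  have hg : ∀ x : K2, c⁻¹ • B.mulVec (x : Fin m → ℝ) ∈ K1 := by
    intro x
    rw [mem_ker_iff]
    have hx := (mem_ker_iff A (1 - lam) _).1 x.2
    have := hAB' (1 - lam) _ hx
    rw [Matrix.mulVec_smul, this]
    rw [smul_comm]
    norm_num
  let f : K1 →ₗ[ℝ] K2 := (B.mulVecLin.comp K1.subtype).codRestrict K2 hf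
  let g : K2 →ₗ[ℝ] K1 := ((c⁻¹ • B.mulVecLin).comp K2.subtype).codRestrict K1 hg
  refine ⟨LinearEquiv.ofLinear f g ?_ ?_, fun x => rfl⟩
  · ext x
    have hx := (mem_ker_iff A (1 - lam) _).1 x.2
    have := hBB (1 - lam) _ hx
    simp only [LinearMap.comp_apply, LinearMap.codRestrict_apply, LinearMap.id_apply,
      Submodule.coe_subtype, LinearMap.smul_apply, Matrix.mulVecLin_apply, f, g]
    change B.mulVec (c⁻¹ • B.mulVec (x : Fin m → ℝ)) _ = (x : Fin m → ℝ) _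
    rw [Matrix.mulVec_smul, this, hc', smul_smul, inv_mul_cancel₀ hc0, one_smul]
  · ext x
    have hx := (mem_ker_iff A lam _).1 x.2
    have := hBB lam _ hx
    simp only [LinearMap.comp_apply, LinearMap.codRestrict_apply, LinearMap.id_apply,
      Submodule.coe_subtype, LinearMap.smul_apply, Matrix.mulVecLin_apply, f, g]
    change (c⁻¹ • B.mulVec (B.mulVec (x : Fin m → ℝ))) _ = (x : Fin m → ℝ) _
    rw [this, smul_smul, inv_mul_cancel₀ hc0, one_smul]
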